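/- Let R be a based ring. Define a relation ~ on the basis B by: X ~ Y if and only if Y is contained in I(1)^n · X for some n ≥ 0. Then ~ is an equivalence relation on B; the resulting partition B = ⋃_{a∈A} B_a (with R_a the ℤ-span of B_a) is a faithful grading of R; and there is a group structure on the set A of equivalence classes, determined by the property that for all a, b ∈ A and all basic X ∈ B_a, Y ∈ B_b, every basic element contained in XY lies in B_{ab}. The identity element of A is the class of 1, whose span R_1 equals R_ad, and the inverse of the class of a basic X is the class of X*. (This group is called the universal grading group U(R).) -/

import Mathlib

/-- A *based ring* (fusion ring). -/
structure BasedRing (ι R : Type*) [Fintype ι] [DecidableEq ι] [Ring R] where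
  b : Module.Basis ι ℤ R
  unit : ι
  b_unit : b unit = 1
  star : ι → ι
  star_invol : ∀ i, star (star i) = i
  c_nonneg : ∀ i j k, 0 ≤ b.repr (b i * b j) k
  adj_right : ∀ i j k, b.repr (b i * b j) k = b.repr (b k * b (star j)) i
  adj_left : ∀ i j k, b.repr (b i * b j) k = b.repr (b (star i) * b k) j

namespace BasedRing

variable {ι R : Type*} [Fintype ι] [DecidableEq ι] [Ring R] (BR : BasedRing ι R)

/-- The element `I(1) = Σ_i X_i X_{i*}`. -/
noncomputable def I1 : R := ∑ i : ι, BR.b i * BR.b (BR.star i)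

/-- `x` (with nonnegative coordinates) *contains* the basic element `k`. -/
def contains (x : R) (k : ι) : Prop := 0 < BR.b.repr x k

/-- Index set of the adjoint subring `R_ad`: basic elements contained in some
power `I(1)^n`, `n ≥ 1`. -/
def adBasis : Set ι := {k | ∃ n : ℕ, 1 ≤ n ∧ BR.contains (BR.I1 ^ n) k}

/-- The relation `X ~ Y` iff `Y` is contained in `I(1)^n · X` for some `n ≥ 0`. -/
def rel (i j : ι) : Prop := ∃ n : ℕ, BR.contains (BR.I1 ^ n * BR.b i) j

lemma repr_mul_left (x y : R) (k : ι) :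
    BR.b.repr (x * y) k = ∑ m, BR.b.repr x m * BR.b.repr (BR.b m * y) k := by
  conv_lhs => rw [← BR.b.sum_repr x, Finset.sum_mul]
  simp only [smul_mul_assoc, map_sum, Finset.sum_apply', map_smul, Finsupp.smul_apply, smul_eq_mul]

lemma repr_mul_right (x y : R) (k : ι) :
    BR.b.repr (x * y) k = ∑ m, BR.b.repr y m * BR.b.repr (x * BR.b m) k := by
  conv_lhs => rw [← BR.b.sum_repr y, Finset.mul_sum]
  simp only [mul_smul_comm, map_sum, Finset.sum_apply', map_smul, Finsupp.smul_apply, smul_eq_mul]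

/-- nonnegative coordinates -/
def Nn (x : R) : Prop := ∀ k, 0 ≤ BR.b.repr x k

lemma nn_basis (i : ι) : BR.Nn (BR.b i) := by
  intro k; simp [Module.Basis.repr_self, Finsupp.single_apply]
  split <;> simp

lemma nn_bmul {y : R} (h : BR.Nn y) (m : ι) : BR.Nn (BR.b m * y) := by
  intro k
  rw [BR.repr_mul_right]
  exact Finset.sum_nonneg fun t _ => mul_nonneg (h t) (BR.c_nonneg m t k)

lemma nn_mul {x y : R} (hx : BR.Nn x) (hy : BR.Nn y) : BR.Nn (x * y) := by
  intro k
  rw [BR.repr_mul_left]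
  exact Finset.sum_nonneg fun m _ => mul_nonneg (hx m) (BR.nn_bmul hy m k)

lemma repr_I1 (m : ι) : BR.b.repr BR.I1 m = ∑ i, BR.b.repr (BR.b i * BR.b (BR.star i)) m := by
  simp [I1, map_sum, Finset.sum_apply']

lemma nn_I1 : BR.Nn BR.I1 := by
  intro k
  rw [BR.repr_I1]
  exact Finset.sum_nonneg fun i _ => (BR.nn_bmul (BR.nn_basis _) i) k

lemma nn_one : BR.Nn (1 : R) := by
  intro k; rw [← BR.b_unit]; exact BR.nn_basis _ k

lemma nn_I1pow (n : ℕ) : BR.Nn (BR.I1 ^ n) := by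
  induction n with
  | zero => simpa using BR.nn_one
  | succ n ih => rw [pow_succ]; exact BR.nn_mul ih BR.nn_I1

lemma le_mul_left {x y : R} (hx : BR.Nn x) (hy : BR.Nn y) (m k : ι) :
    BR.b.repr x m * BR.b.repr (BR.b m * y) k ≤ BR.b.repr (x * y) k := by
  conv_rhs => rw [BR.repr_mul_left]
  exact Finset.single_le_sum (fun t _ => mul_nonneg (hx t) (BR.nn_bmul hy t k))
    (Finset.mem_univ m)

lemma le_mul_right {x y : R} (hx : BR.Nn x) (hy : BR.Nn y) (m k : ι) :
    BR.b.repr y m * BR.b.repr (x * BR.b m) k ≤ BR.b.repr (x * y) k := by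
  conv_rhs => rw [BR.repr_mul_right]
  exact Finset.single_le_sum
    (fun t _ => mul_nonneg (hy t) ((BR.nn_mul hx (BR.nn_basis t)) k))
    (Finset.mem_univ m)

lemma pos_mul_left {x y : R} (hx : BR.Nn x) (hy : BR.Nn y) {m k : ι}
    (h1 : 0 < BR.b.repr x m) (h2 : 0 < BR.b.repr (BR.b m * y) k) :
    0 < BR.b.repr (x * y) k :=
  lt_of_lt_of_le (mul_pos h1 h2) (BR.le_mul_left hx hy m k)

lemma pos_mul_right {x y : R} (hx : BR.Nn x) (hy : BR.Nn y) {m k : ι}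
    (h1 : 0 < BR.b.repr y m) (h2 : 0 < BR.b.repr (x * BR.b m) k) :
    0 < BR.b.repr (x * y) k :=
  lt_of_lt_of_le (mul_pos h1 h2) (BR.le_mul_right hx hy m k)

lemma exists_mul_left {x y : R} (hx : BR.Nn x) (hy : BR.Nn y) {k : ι}
    (h : 0 < BR.b.repr (x * y) k) :
    ∃ m, 0 < BR.b.repr x m ∧ 0 < BR.b.repr (BR.b m * y) k := by
  rw [BR.repr_mul_left] at h
  obtain ⟨m, -, hm⟩ := Finset.exists_lt_of_sum_lt (f := fun _ => (0:ℤ)) (by simpa using h)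
  rcases mul_pos_iff.mp hm with ⟨h1, h2⟩ | ⟨h1, h2⟩
  · exact ⟨m, h1, h2⟩
  · exact absurd h1 (not_lt.mpr (hx m))

lemma exists_mul_right {x y : R} (hx : BR.Nn x) (hy : BR.Nn y) {k : ι}
    (h : 0 < BR.b.repr (x * y) k) :
    ∃ m, 0 < BR.b.repr y m ∧ 0 < BR.b.repr (x * BR.b m) k := by
  rw [BR.repr_mul_right] at h
  obtain ⟨m, -, hm⟩ := Finset.exists_lt_of_sum_lt (f := fun _ => (0:ℤ)) (by simpa using h)
  rcases mul_pos_iff.mp hm with ⟨h1, h2⟩ | ⟨h1, h2⟩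
  · exact ⟨m, h1, h2⟩
  · exact absurd h1 (not_lt.mpr (hy m))

/-- `c_{ij}^k = c_{j*,i*}^{k*}` -/
lemma keyK (i j k : ι) :
    BR.b.repr (BR.b i * BR.b j) k
      = BR.b.repr (BR.b (BR.star j) * BR.b (BR.star i)) (BR.star k) := by
  rw [BR.adj_right (BR.star j) (BR.star i) (BR.star k), BR.star_invol,
    BR.adj_left (BR.star k) i (BR.star j), BR.star_invol,
    ← BR.adj_right i j k]

lemma repr_basis (i k : ι) : BR.b.repr (BR.b i) k = if k = i then 1 else 0 := by
  rw [Module.Basis.repr_self, Finsupp.single_apply]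
  simp [eq_comm]

lemma repr_basis_self (i : ι) : BR.b.repr (BR.b i) i = 1 := by
  simp [BR.repr_basis]

lemma repr_one (k : ι) : BR.b.repr (1 : R) k = if k = BR.unit then 1 else 0 := by
  rw [← BR.b_unit, BR.repr_basis]

lemma star_unit : BR.star BR.unit = BR.unit := by
  have h := BR.adj_left BR.unit BR.unit BR.unit
  rw [BR.b_unit, one_mul, mul_one, BR.repr_one, BR.repr_basis] at h
  simp at h
  by_contra hne
  exact hne h.symm

lemma star_inj : Function.Bijective BR.star :=
  (Function.Involutive.bijective BR.star_invol)

lemma sum_star (f : ι → ℤ) : ∑ i, f (BR.star i) = ∑ i, f i :=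
  Fintype.sum_bijective BR.star BR.star_inj _ f (fun _ => rfl)

lemma repr_I1_star (m : ι) : BR.b.repr BR.I1 (BR.star m) = BR.b.repr BR.I1 m := by
  rw [BR.repr_I1, BR.repr_I1]
  refine Finset.sum_congr rfl fun i _ => ?_
  conv_rhs => rw [BR.keyK i (BR.star i) m, BR.star_invol]

lemma rI1_right (m : ι) : BR.b.repr BR.I1 m = ∑ i, BR.b.repr (BR.b m * BR.b i) i := by
  rw [BR.repr_I1]
  refine Finset.sum_congr rfl fun i _ => ?_
  rw [BR.adj_right, BR.star_invol]

lemma rI1_left (m : ι) : BR.b.repr BR.I1 m = ∑ i, BR.b.repr (BR.b i * BR.b m) i := by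
  rw [BR.repr_I1, ← BR.sum_star (fun i => BR.b.repr (BR.b i * BR.b m) i)]
  refine Finset.sum_congr rfl fun i _ => ?_
  rw [BR.adj_left]

lemma trace_eq (y : R) :
    ∑ i, BR.b.repr (BR.b i * y) i = ∑ m, BR.b.repr BR.I1 m * BR.b.repr y m := by
  calc ∑ i, BR.b.repr (BR.b i * y) i
      = ∑ i, ∑ m, BR.b.repr y m * BR.b.repr (BR.b i * BR.b m) i :=
        Finset.sum_congr rfl fun i _ => BR.repr_mul_right _ _ _
    _ = ∑ m, ∑ i, BR.b.repr y m * BR.b.repr (BR.b i * BR.b m) i := Finset.sum_comm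
    _ = ∑ m, BR.b.repr BR.I1 m * BR.b.repr y m := by
        refine Finset.sum_congr rfl fun m _ => ?_
        rw [← Finset.mul_sum, mul_comm, ← BR.rI1_left]

lemma trace_comm (x y : R) :
    ∑ i, BR.b.repr (BR.b i * (x * y)) i = ∑ i, BR.b.repr (BR.b i * (y * x)) i := by
  have h : ∀ u v : R, ∀ i : ι, BR.b.repr (BR.b i * (u * v)) i
      = ∑ m, BR.b.repr (BR.b i * u) m * BR.b.repr (BR.b m * v) i := by
    intro u v i
    rw [← mul_assoc, BR.repr_mul_left (BR.b i * u) v]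
  simp only [h]
  rw [Finset.sum_comm]
  exact Finset.sum_congr rfl fun i _ => Finset.sum_congr rfl fun m _ => mul_comm _ _

lemma central_basis (j : ι) : BR.I1 * BR.b j = BR.b j * BR.I1 := by
  refine BR.b.ext_elem fun k => ?_
  have hl : BR.b.repr (BR.I1 * BR.b j) k
      = ∑ i, BR.b.repr (BR.b i * (BR.b k * BR.b (BR.star j))) i := by
    rw [BR.repr_mul_left, BR.trace_eq]
    exact Finset.sum_congr rfl fun m _ => by rw [BR.adj_right m j k]
  have hr : BR.b.repr (BR.b j * BR.I1) k
      = ∑ i, BR.b.repr (BR.b i * (BR.b (BR.star j) * BR.b k)) i := by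
    rw [BR.repr_mul_right, BR.trace_eq]
    exact Finset.sum_congr rfl fun m _ => by rw [BR.adj_left j m k]
  rw [hl, hr, BR.trace_comm]

lemma central (x : R) : Commute BR.I1 x := by
  rw [← BR.b.sum_repr x]
  exact Commute.sum_right _ _ _ fun j _ =>
    Commute.smul_right (BR.central_basis j) _

lemma central_pow (n : ℕ) (x : R) : BR.I1 ^ n * x = x * BR.I1 ^ n :=
  ((BR.central x).pow_left n).eq

lemma repr_I1pow_star (n : ℕ) (k : ι) :
    BR.b.repr (BR.I1 ^ n) (BR.star k) = BR.b.repr (BR.I1 ^ n) k := by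
  induction n generalizing k with
  | zero =>
    rw [pow_zero, BR.repr_one, BR.repr_one]
    by_cases h : k = BR.unit
    · subst h; rw [BR.star_unit]
    · rw [if_neg h, if_neg]
      intro he
      exact h (by rw [← BR.star_invol k, he, BR.star_unit])
  | succ n ih =>
    have hA : ∀ m, BR.b.repr (BR.b m * BR.I1) (BR.star k)
        = BR.b.repr (BR.b (BR.star m) * BR.I1) k := by
      intro m
      rw [BR.repr_mul_right, ← BR.central_basis (BR.star m), BR.repr_mul_left,
        ← BR.sum_star (fun t => BR.b.repr BR.I1 t * BR.b.repr (BR.b t * BR.b (BR.star m)) k)]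
      refine Finset.sum_congr rfl fun t _ => ?_
      rw [BR.repr_I1_star, BR.keyK m t (BR.star k), BR.star_invol]
    rw [pow_succ, BR.repr_mul_left, BR.repr_mul_left]
    rw [← BR.sum_star (fun m => BR.b.repr (BR.I1^n) m * BR.b.repr (BR.b m * BR.I1) k)]
    refine Finset.sum_congr rfl fun m _ => ?_
    rw [hA m, ih]

lemma repr_pow_symm (n : ℕ) (i j : ι) :
    BR.b.repr (BR.I1 ^ n * BR.b i) j = BR.b.repr (BR.I1 ^ n * BR.b j) i := by
  rw [BR.repr_mul_left, BR.repr_mul_left,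
    ← BR.sum_star (fun m => BR.b.repr (BR.I1^n) m * BR.b.repr (BR.b m * BR.b j) i)]
  refine Finset.sum_congr rfl fun m _ => ?_
  rw [BR.repr_I1pow_star, BR.adj_left m i j]

lemma rel_refl (i : ι) : BR.rel i i :=
  ⟨0, by simp [contains, BR.repr_basis_self]⟩

lemma rel_symm {i j : ι} (h : BR.rel i j) : BR.rel j i := by
  obtain ⟨n, hn⟩ := h
  exact ⟨n, by rw [contains, ← BR.repr_pow_symm]; exact hn⟩

lemma rel_trans {i j k : ι} (h : BR.rel i j) (h' : BR.rel j k) : BR.rel i k := by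
  obtain ⟨n, hn⟩ := h
  obtain ⟨m, hm⟩ := h'
  refine ⟨m + n, ?_⟩
  rw [contains, pow_add, mul_assoc]
  exact BR.pos_mul_right (BR.nn_I1pow m) (BR.nn_mul (BR.nn_I1pow n) (BR.nn_basis i)) hn hm

lemma rel_equiv : Equivalence BR.rel :=
  ⟨BR.rel_refl, BR.rel_symm, BR.rel_trans⟩

lemma unit_coeff_left (i : ι) : BR.b.repr (BR.b (BR.star i) * BR.b i) BR.unit = 1 := by
  rw [BR.adj_right, BR.b_unit, one_mul, BR.repr_basis_self]

lemma unit_coeff_right (i : ι) : BR.b.repr (BR.b i * BR.b (BR.star i)) BR.unit = 1 := by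
  rw [BR.adj_right, BR.star_invol, BR.b_unit, one_mul, BR.repr_basis_self]

lemma contains_unit_mul (i j : ι) : BR.contains (BR.b BR.unit * BR.b j) j := by
  rw [contains, BR.b_unit, one_mul, BR.repr_basis_self]; norm_num

lemma exists_contains (i j : ι) : ∃ k, BR.contains (BR.b i * BR.b j) k := by
  by_contra h
  push_neg at h
  have hz : BR.b i * BR.b j = 0 := by
    refine BR.b.ext_elem fun k => ?_
    have := h k
    rw [contains, not_lt] at this
    have h2 := BR.nn_mul (BR.nn_basis i) (BR.nn_basis j) k
    simp [le_antisymm this h2]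
  have hpos : 0 < BR.b.repr (BR.b (BR.star i) * BR.b i * BR.b j) j := by
    refine BR.pos_mul_left (BR.nn_mul (BR.nn_basis _) (BR.nn_basis _)) (BR.nn_basis _)
      (m := BR.unit) ?_ ?_
    · rw [BR.unit_coeff_left]; norm_num
    · exact BR.contains_unit_mul i j
  rw [mul_assoc, hz, mul_zero] at hpos
  simp at hpos

noncomputable def pick (i j : ι) : ι := (BR.exists_contains i j).choose

lemma pick_spec (i j : ι) : BR.contains (BR.b i * BR.b j) (BR.pick i j) :=
  (BR.exists_contains i j).choose_spec

lemma mono_mul_left {x x' : R} (h : ∀ m, BR.b.repr x m ≤ BR.b.repr x' m)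
    {y : R} (hy : BR.Nn y) (k : ι) : BR.b.repr (x * y) k ≤ BR.b.repr (x' * y) k := by
  rw [BR.repr_mul_left, BR.repr_mul_left]
  exact Finset.sum_le_sum fun m _ =>
    mul_le_mul_of_nonneg_right (h m) (BR.nn_bmul hy m k)

lemma le_I1 (i m : ι) : BR.b.repr (BR.b i * BR.b (BR.star i)) m ≤ BR.b.repr BR.I1 m := by
  rw [BR.repr_I1]
  exact Finset.single_le_sum
    (fun t _ => BR.nn_bmul (BR.nn_basis _) t m) (Finset.mem_univ i)

/-- all constituents of `X_i X_j` are equivalent -/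
lemma rel_of_contains₂ {i j k k' : ι} (h : BR.contains (BR.b i * BR.b j) k)
    (h' : BR.contains (BR.b i * BR.b j) k') : BR.rel k k' := by
  refine ⟨1, ?_⟩
  have hj : 0 < BR.b.repr (BR.b (BR.star i) * BR.b k) j := by
    rw [← BR.adj_left]; exact h
  have h2 : 0 < BR.b.repr (BR.b i * (BR.b (BR.star i) * BR.b k)) k' :=
    BR.pos_mul_right (BR.nn_basis _) (BR.nn_mul (BR.nn_basis _) (BR.nn_basis _)) hj h'
  rw [← mul_assoc] at h2
  rw [contains, pow_one]
  calc (0:ℤ) < BR.b.repr (BR.b i * BR.b (BR.star i) * BR.b k) k' := h2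
    _ ≤ BR.b.repr (BR.I1 * BR.b k) k' :=
        BR.mono_mul_left (BR.le_I1 i) (BR.nn_basis k) k'

lemma classlift_left {i i' j k' : ι} (h : BR.rel i i')
    (h' : BR.contains (BR.b i' * BR.b j) k') :
    ∃ k, BR.contains (BR.b i * BR.b j) k ∧ BR.rel k k' := by
  obtain ⟨n, hn⟩ := h
  have h1 : 0 < BR.b.repr ((BR.I1 ^ n * BR.b i) * BR.b j) k' :=
    BR.pos_mul_left (BR.nn_mul (BR.nn_I1pow n) (BR.nn_basis i)) (BR.nn_basis j) hn h'
  rw [mul_assoc] at h1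
  obtain ⟨m, hm1, hm2⟩ := BR.exists_mul_right (BR.nn_I1pow n)
    (BR.nn_mul (BR.nn_basis i) (BR.nn_basis j)) h1
  exact ⟨m, hm1, n, hm2⟩

lemma classlift_right {i j j' k' : ι} (h : BR.rel j j')
    (h' : BR.contains (BR.b i * BR.b j') k') :
    ∃ k, BR.contains (BR.b i * BR.b j) k ∧ BR.rel k k' := by
  obtain ⟨n, hn⟩ := h
  have h1 : 0 < BR.b.repr (BR.b i * (BR.I1 ^ n * BR.b j)) k' :=
    BR.pos_mul_right (BR.nn_basis i) (BR.nn_mul (BR.nn_I1pow n) (BR.nn_basis j)) hn h'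
  rw [← mul_assoc, ← BR.central_pow n (BR.b i), mul_assoc] at h1
  obtain ⟨m, hm1, hm2⟩ := BR.exists_mul_right (BR.nn_I1pow n)
    (BR.nn_mul (BR.nn_basis i) (BR.nn_basis j)) h1
  exact ⟨m, hm1, n, hm2⟩

lemma rel_pick_congr {i i' j j' : ι} (hi : BR.rel i i') (hj : BR.rel j j') :
    BR.rel (BR.pick i j) (BR.pick i' j') := by
  obtain ⟨k, hk, hkr⟩ := BR.classlift_left hi (BR.pick_spec i' j)
  obtain ⟨k2, hk2, hk2r⟩ := BR.classlift_right hj (BR.pick_spec i' j')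
  exact BR.rel_trans (BR.rel_of_contains₂ (BR.pick_spec i j) hk)
    (BR.rel_trans hkr
      (BR.rel_trans (BR.rel_of_contains₂ (BR.pick_spec i' j) hk2) hk2r))

lemma rel_star_aux (n : ℕ) (i j : ι) :
    BR.b.repr (BR.I1 ^ n * BR.b (BR.star i)) (BR.star j)
      = BR.b.repr (BR.I1 ^ n * BR.b i) j := by
  rw [BR.repr_mul_left]
  have : ∀ m, BR.b.repr (BR.b m * BR.b (BR.star i)) (BR.star j)
      = BR.b.repr (BR.b i * BR.b (BR.star m)) j := by
    intro m
    rw [BR.keyK m (BR.star i) (BR.star j), BR.star_invol, BR.star_invol]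
  simp only [this]
  have hre := Fintype.sum_bijective BR.star BR.star_inj
    (fun x => BR.b.repr (BR.I1^n) x * BR.b.repr (BR.b i * BR.b (BR.star x)) j)
    (fun x => BR.b.repr (BR.I1^n) (BR.star x) * BR.b.repr (BR.b i * BR.b x) j)
    (fun x => by rw [BR.star_invol])
  rw [hre]
  simp only [BR.repr_I1pow_star]
  rw [← BR.repr_mul_right, BR.central_pow]

lemma rel_star {i j : ι} (h : BR.rel i j) : BR.rel (BR.star i) (BR.star j) := by
  obtain ⟨n, hn⟩ := h
  exact ⟨n, by rw [contains, BR.rel_star_aux]; exact hn⟩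

def relSetoid : Setoid ι := ⟨BR.rel, BR.rel_equiv⟩

def GU : Type _ := Quotient BR.relSetoid

instance : Finite BR.GU := inferInstanceAs (Finite (Quotient BR.relSetoid))

def cls (i : ι) : BR.GU := Quotient.mk BR.relSetoid i

lemma cls_eq {i j : ι} : BR.cls i = BR.cls j ↔ BR.rel i j :=
  ⟨Quotient.exact, fun h => Quotient.sound h⟩

lemma cls_surj : Function.Surjective BR.cls := Quotient.exists_rep

noncomputable instance : Mul BR.GU :=
  ⟨Quotient.lift₂ (fun i j => BR.cls (BR.pick i j))
    (fun _ _ _ _ hi hj => BR.cls_eq.mpr (BR.rel_pick_congr hi hj))⟩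

instance : One BR.GU := ⟨BR.cls BR.unit⟩

noncomputable instance : Inv BR.GU :=
  ⟨Quotient.lift (fun i => BR.cls (BR.star i))
    (fun _ _ h => BR.cls_eq.mpr (BR.rel_star h))⟩

lemma cls_mul (i j : ι) : BR.cls i * BR.cls j = BR.cls (BR.pick i j) := rfl

lemma degree_eq {i j k : ι} (h : BR.contains (BR.b i * BR.b j) k) :
    BR.cls k = BR.cls i * BR.cls j := by
  rw [BR.cls_mul]
  exact BR.cls_eq.mpr (BR.rel_of_contains₂ h (BR.pick_spec i j))

lemma contains_inv_self (i : ι) : BR.contains (BR.b (BR.star i) * BR.b i) BR.unit := by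
  rw [contains, BR.unit_coeff_left]; norm_num

noncomputable instance : Group BR.GU :=
  Group.ofLeftAxioms
    (fun a b c => by
      induction a using Quotient.ind with | _ i =>
      induction b using Quotient.ind with | _ j =>
      induction c using Quotient.ind with | _ k =>
      have h1 : BR.contains ((BR.b i * BR.b j) * BR.b k) (BR.pick (BR.pick i j) k) :=
        BR.pos_mul_left (BR.nn_mul (BR.nn_basis i) (BR.nn_basis j)) (BR.nn_basis k)
          (BR.pick_spec i j) (BR.pick_spec (BR.pick i j) k)
      rw [mul_assoc] at h1
      obtain ⟨m, hm1, hm2⟩ := BR.exists_mul_right (BR.nn_basis i)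
        (BR.nn_mul (BR.nn_basis j) (BR.nn_basis k)) h1
      calc (BR.cls i * BR.cls j) * BR.cls k = BR.cls (BR.pick (BR.pick i j) k) := rfl
        _ = BR.cls i * BR.cls m := BR.degree_eq hm2
        _ = BR.cls i * (BR.cls j * BR.cls k) := by rw [← BR.degree_eq hm1])
    (fun a => by
      induction a using Quotient.ind with | _ i =>
      exact (BR.degree_eq (BR.contains_unit_mul i i)).symm)
    (fun a => by
      induction a using Quotient.ind with | _ i =>
      exact (BR.degree_eq (BR.contains_inv_self i)).symm)

lemma contains_I1_unit : BR.contains BR.I1 BR.unit := by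
  rw [contains, BR.repr_I1]
  simp only [BR.unit_coeff_right]
  have : Nonempty ι := ⟨BR.unit⟩
  have h : 0 < (Fintype.card ι : ℤ) := by exact_mod_cast Fintype.card_pos
  simpa using h

lemma rel_unit_iff (i : ι) : BR.rel BR.unit i ↔ i ∈ BR.adBasis := by
  constructor
  · rintro ⟨n, hn⟩
    rw [contains, BR.b_unit, mul_one] at hn
    match n with
    | 0 =>
      rw [pow_zero, BR.repr_one] at hn
      have hi : i = BR.unit := by by_contra h; rw [if_neg h] at hn; simp at hn
      subst hi
      exact ⟨1, le_refl 1, by rw [pow_one]; exact BR.contains_I1_unit⟩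
    | (n+1) => exact ⟨n+1, Nat.succ_le_succ (Nat.zero_le n), hn⟩
  · rintro ⟨n, -, hn⟩
    exact ⟨n, by rw [contains, BR.b_unit, mul_one]; exact hn⟩


end BasedRing

/-- The relation `X ~ Y` iff `Y` is contained in `I(1)^n · X` for
some `n ≥ 0` is an equivalence relation on the basis; the resulting partition
is a faithful grading of `R` by a group structure on the set of equivalence
classes (realized here by a surjective map `π : ι → G` onto a group `G` whose
fibers are the equivalence classes), determined by: every basic constituent of
`X_i X_j` has degree `π i * π j`. The identity of the group is the class of
`1`, which consists exactly of the basic elements of `R_ad`, and the inverse of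
the class of a basic element is the class of its `*`-conjugate. This is the
universal grading of `R` by the universal grading group `U(R)`. -/
theorem universal_grading_group {ι R : Type*} [Fintype ι] [DecidableEq ι]
    [Ring R] (BR : BasedRing ι R) :
    Equivalence BR.rel ∧
    ∃ (G : Type) (_ : Group G) (π : ι → G),
      Function.Surjective π ∧
      (∀ i j, BR.rel i j ↔ π i = π j) ∧
      (∀ i j k, BR.contains (BR.b i * BR.b j) k → π k = π i * π j) ∧
      π BR.unit = 1 ∧
      (∀ i, π i = 1 ↔ i ∈ BR.adBasis) ∧
      (∀ i, π (BR.star i) = (π i)⁻¹) := by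

  have hone : equivShrink.{0} BR.GU (1 : BR.GU) = 1 := by
    have h2 : (equivShrink.{0} BR.GU).symm 1 = 1 := equivShrink_symm_one
    rw [← h2]
    exact (equivShrink.{0} BR.GU).apply_symm_apply 1
  have hcu : (BR.cls BR.unit) = (1 : BR.GU) := rfl
  refine ⟨BR.rel_equiv, Shrink.{0} BR.GU, inferInstance,
    fun i => equivShrink.{0} BR.GU (BR.cls i), ?_, ?_, ?_, ?_, ?_, ?_⟩
  · intro g
    obtain ⟨q, hq⟩ := (equivShrink.{0} BR.GU).surjective g
    obtain ⟨i, hi⟩ := BR.cls_surj q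
    exact ⟨i, by dsimp only; rw [hi, hq]⟩
  · intro i j
    dsimp only
    rw [← BR.cls_eq]
    exact (Equiv.apply_eq_iff_eq _).symm
  · intro i j k h
    dsimp only
    rw [BR.degree_eq h, equivShrink_mul]
  · dsimp only
    rw [hcu, hone]
  · intro i
    dsimp only
    rw [show (1 : Shrink.{0} BR.GU) = equivShrink.{0} BR.GU (BR.cls BR.unit) from by rw [hcu, hone],
      Equiv.apply_eq_iff_eq, BR.cls_eq]
    exact ⟨fun h => (BR.rel_unit_iff i).mp (BR.rel_symm h),
      fun h => BR.rel_symm ((BR.rel_unit_iff i).mpr h)⟩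
  · intro i
    dsimp only
    rw [show BR.cls (BR.star i) = (BR.cls i)⁻¹ from rfl, equivShrink_inv]
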